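/- If m is an even positive integer, then for every nonzero real vector x in R^n, the Hilbert tensor form H_n x^m = \sum_{i_1,...,i_m=1}^n x_{i_1} \cdots x_{i_m} / (i_1 + \cdots + i_m - m + 1) is strictly positive; that is, the m-order n-dimensional Hilbert tensor is positive definite. -/

import Mathlib

open MeasureTheory Polynomial Set

/-- The Hilbert tensor form `H_n x^m` (indices written 0-based, so the
denominator `i_1 + ... + i_m - m + 1` becomes `(∑ j, i j) + 1`). -/
noncomputable def hilbertForm (m n : ℕ) (x : Fin n → ℝ) : ℝ :=
  ∑ i : Fin m → Fin n, (∏ j, x (i j)) / (((∑ j, (i j : ℕ)) + 1 : ℕ) : ℝ)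

lemma hilbertForm_eq_integral (m n : ℕ) (x : Fin n → ℝ) :
    hilbertForm m n x = ∫ t in (0:ℝ)..1, (∑ i : Fin n, x i * t ^ (i : ℕ)) ^ m := by
  have hint : ∀ p : Fin m → Fin n, IntervalIntegrable
      (fun t : ℝ => (∏ j, x (p j)) * t ^ (∑ j, (p j : ℕ))) volume 0 1 := fun p =>
    (Continuous.intervalIntegrable (by continuity) 0 1)
  have expand : ∀ t : ℝ, (∑ i : Fin n, x i * t ^ (i : ℕ)) ^ m
      = ∑ p : Fin m → Fin n, (∏ j, x (p j)) * t ^ (∑ j, (p j : ℕ)) := by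
    intro t
    rw [Finset.sum_pow' Finset.univ (fun i : Fin n => x i * t ^ (i : ℕ)) m]
    rw [Fintype.piFinset_univ]
    refine Finset.sum_congr rfl fun p _ => ?_
    rw [Finset.prod_mul_distrib, Finset.prod_pow_eq_pow_sum]
  have : (∫ t in (0:ℝ)..1, (∑ i : Fin n, x i * t ^ (i : ℕ)) ^ m)
      = ∑ p : Fin m → Fin n, ∫ t in (0:ℝ)..1, (∏ j, x (p j)) * t ^ (∑ j, (p j : ℕ)) := by
    rw [← intervalIntegral.integral_finset_sum (fun p _ => hint p)]
    simp only [expand]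
  rw [this, hilbertForm]
  refine Finset.sum_congr rfl fun p _ => ?_
  rw [intervalIntegral.integral_const_mul, integral_pow]
  push_cast
  ring
theorem hilbertForm_pos_of_even (m n : ℕ) (hm : 0 < m) (hme : Even m)
    (x : Fin n → ℝ) (hx : x ≠ 0) :
    0 < hilbertForm m n x := by
  classical
  set P : Polynomial ℝ := ∑ i : Fin n, Polynomial.C (x i) * Polynomial.X ^ (i : ℕ) with hP
  have hPeval : ∀ t : ℝ, P.eval t = ∑ i : Fin n, x i * t ^ (i : ℕ) := by
    intro t; simp [hP, Polynomial.eval_finset_sum]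
  have hPne : P ≠ 0 := by
    intro h
    apply hx
    funext i
    have hc := congrArg (fun q => Polynomial.coeff q (i : ℕ)) h
    simp only [hP, Polynomial.finset_sum_coeff, Polynomial.coeff_C_mul,
      Polynomial.coeff_X_pow, Polynomial.coeff_zero, mul_ite, mul_one, mul_zero,
      Finset.sum_ite_eq' , Finset.mem_univ, if_true] at hc
    have : (∑ k : Fin n, if (i : ℕ) = (k : ℕ) then x k else 0) = x i := by
      rw [Finset.sum_eq_single i] <;> simp_all [Fin.val_eq_val, eq_comm]
    rw [this] at hc
    simpa using hc
  rw [hilbertForm_eq_integral]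
  have hfc : Continuous fun t : ℝ => (∑ i : Fin n, x i * t ^ (i : ℕ)) ^ m := by continuity
  have h0 : 0 ≤ᵐ[volume.restrict (Set.uIoc (0:ℝ) 1)]
      fun t : ℝ => (∑ i : Fin n, x i * t ^ (i : ℕ)) ^ m :=
    Filter.Eventually.of_forall fun t => hme.pow_nonneg _
  rw [intervalIntegral.integral_pos_iff_support_of_nonneg_ae' h0
    (hfc.intervalIntegrable 0 1)]
  refine ⟨zero_lt_one, ?_⟩
  have hroots : {t : ℝ | P.IsRoot t}.Finite := Polynomial.finite_setOf_isRoot hPne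
  have hsub : Ioc (0:ℝ) 1 \ {t : ℝ | P.IsRoot t}
      ⊆ Function.support (fun t : ℝ => (∑ i : Fin n, x i * t ^ (i : ℕ)) ^ m) ∩ Ioc 0 1 := by
    rintro t ⟨ht, hr⟩
    refine ⟨?_, ht⟩
    simp only [Function.mem_support]
    rw [pow_ne_zero_iff hm.ne', ← hPeval]
    exact hr
  calc (0:ENNReal) < 1 := by norm_num
    _ = volume (Ioc (0:ℝ) 1 \ {t : ℝ | P.IsRoot t}) := by
        rw [measure_diff_null (hroots.measure_zero _)]; simp
    _ ≤ _ := measure_mono hsub
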